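/- arXiv:2407.20915 — 3 statements merged into one kernel-verified Lean document; each statement's English description precedes it below -/
import Mathlib

section
/- Let I be a nonempty order-connected subset (interval) of the positive reals, and let c : ℤ → ℝ be a family of non-negative reals such that for every r ∈ I, c_i · r^i → 0 as |i| → ∞. Assume that for every r ∈ I there exists an index i(r) ∈ ℤ such that c_{i(r)} · r^{i(r)} > c_i · r^i for every i ≠ i(r). Then there exists a single j ∈ ℤ such that for every r ∈ I and every i ≠ j one has c_j · r^j > c_i · r^i. -/
open Filter

/-- If `i₀` dominates at radius `r > 0`, then `c i₀ > 0`. -/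
private lemma dom_pos_aux (c : ℤ → ℝ) (hc : ∀ i, 0 ≤ c i) {r : ℝ} (hr : 0 < r) {i₀ : ℤ}
    (hD : ∀ i : ℤ, i ≠ i₀ → c i₀ * r ^ i₀ > c i * r ^ i) : 0 < c i₀ := by
  have h := hD (i₀ + 1) (by omega)
  have h2 : (0:ℝ) ≤ c (i₀ + 1) * r ^ (i₀ + 1) :=
    mul_nonneg (hc _) (zpow_pos hr _).le
  have h3 : 0 < c i₀ * r ^ i₀ := lt_of_le_of_lt h2 h
  exact lt_of_le_of_ne (hc i₀) (fun h0 => by rw [← h0, zero_mul] at h3; exact lt_irrefl 0 h3)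

/-- Monotonicity: a dominant index at a larger radius is at least as large. -/
private lemma dom_mono_aux (c : ℤ → ℝ) (hc : ∀ i, 0 ≤ c i) {r s : ℝ} (hr : 0 < r) (hrs : r < s)
    {i₀ i₁ : ℤ}
    (hD₀ : ∀ i : ℤ, i ≠ i₀ → c i₀ * r ^ i₀ > c i * r ^ i)
    (hD₁ : ∀ i : ℤ, i ≠ i₁ → c i₁ * s ^ i₁ > c i * s ^ i)
    (hne : i₀ ≠ i₁) : i₀ < i₁ := by
  have hs : 0 < s := lt_trans hr hrs
  have hc₀ : 0 < c i₀ := dom_pos_aux c hc hr hD₀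
  have h1 : c i₀ * r ^ i₀ > c i₁ * r ^ i₁ := hD₀ i₁ (Ne.symm hne)
  have h2 : c i₁ * s ^ i₁ > c i₀ * s ^ i₀ := hD₁ i₀ hne
  by_contra hlt
  push_neg at hlt
  -- chain the two inequalities
  have h1' : c i₀ * r ^ i₀ * s ^ i₁ > c i₁ * r ^ i₁ * s ^ i₁ := by
    exact (mul_lt_mul_iff_left₀ (zpow_pos hs _)).mpr h1
  have h2' : c i₁ * s ^ i₁ * r ^ i₁ > c i₀ * s ^ i₀ * r ^ i₁ := by
    exact (mul_lt_mul_iff_left₀ (zpow_pos hr _)).mpr h2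
  have h3 : c i₀ * r ^ i₀ * s ^ i₁ > c i₀ * s ^ i₀ * r ^ i₁ := by
    calc c i₀ * r ^ i₀ * s ^ i₁ > c i₁ * r ^ i₁ * s ^ i₁ := h1'
    _ = c i₁ * s ^ i₁ * r ^ i₁ := by ring
    _ > c i₀ * s ^ i₀ * r ^ i₁ := h2'
  have h4 : r ^ i₀ * s ^ i₁ > s ^ i₀ * r ^ i₁ := by
    have := (mul_lt_mul_iff_right₀ hc₀).mp (by linarith [h3] : c i₀ * (s ^ i₀ * r ^ i₁) < c i₀ * (r ^ i₀ * s ^ i₁))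
    linarith
  -- rewrite as a comparison of powers with exponent i₀ - i₁ ≥ 0
  have h5 : s ^ (i₀ - i₁) < r ^ (i₀ - i₁) := by
    rw [zpow_sub₀ (ne_of_gt hs), zpow_sub₀ (ne_of_gt hr)]
    rw [div_lt_div_iff₀ (zpow_pos hs _) (zpow_pos hr _)]
    linarith
  set k : ℕ := (i₀ - i₁).toNat with hk
  have hkk : (k : ℤ) = i₀ - i₁ := Int.toNat_of_nonneg (by omega)
  have h6 : s ^ (i₀ - i₁) = s ^ k := by rw [← hkk, zpow_natCast]
  have h7 : r ^ (i₀ - i₁) = r ^ k := by rw [← hkk, zpow_natCast]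
  have h8 : r ^ k ≤ s ^ k := pow_le_pow_left₀ hr.le hrs.le k
  rw [h6, h7] at h5
  linarith

theorem dominant_index_constant_on_interval
    (I : Set ℝ) (hne : I.Nonempty) (hconn : I.OrdConnected) (hpos : I ⊆ Set.Ioi 0)
    (c : ℤ → ℝ) (hc : ∀ i, 0 ≤ c i)
    (hconv : ∀ r ∈ I, Tendsto (fun i : ℤ => c i * r ^ i) cofinite (nhds 0))
    (hdom : ∀ r ∈ I, ∃ i₀ : ℤ, ∀ i : ℤ, i ≠ i₀ → c i₀ * r ^ i₀ > c i * r ^ i) :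
    ∃ j : ℤ, ∀ r ∈ I, ∀ i : ℤ, i ≠ j → c j * r ^ j > c i * r ^ i := by
  -- main induction on the gap between the two dominant indices
  have key : ∀ n : ℕ, ∀ r ∈ I, ∀ s ∈ I, r < s → ∀ i₀ i₁ : ℤ,
      (∀ i : ℤ, i ≠ i₀ → c i₀ * r ^ i₀ > c i * r ^ i) →
      (∀ i : ℤ, i ≠ i₁ → c i₁ * s ^ i₁ > c i * s ^ i) →
      (i₁ - i₀).toNat ≤ n → i₀ = i₁ := by
    intro n
    induction n with
    | zero =>
      intro r hr s hs hrs i₀ i₁ hD₀ hD₁ hgap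
      by_contra hne'
      have := dom_mono_aux c hc (hpos hr) hrs hD₀ hD₁ hne'
      omega
    | succ n ih =>
      intro r hr s hs hrs i₀ i₁ hD₀ hD₁ hgap
      by_contra hne'
      have hlt : i₀ < i₁ := dom_mono_aux c hc (hpos hr) hrs hD₀ hD₁ hne'
      have hrpos : (0:ℝ) < r := hpos hr
      have hspos : (0:ℝ) < s := hpos hs
      -- crossing point via IVT
      set f : ℝ → ℝ := fun t => c i₀ * t ^ i₀ - c i₁ * t ^ i₁ with hf
      have hcont : ContinuousOn f (Set.Icc r s) := by
        apply ContinuousOn.sub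
        · exact continuousOn_const.mul (continuousOn_id.zpow₀ i₀
            (fun a ha => Or.inl (ne_of_gt (lt_of_lt_of_le hrpos ha.1))))
        · exact continuousOn_const.mul (continuousOn_id.zpow₀ i₁
            (fun a ha => Or.inl (ne_of_gt (lt_of_lt_of_le hrpos ha.1))))
      have hfr : 0 < f r := by
        have := hD₀ i₁ (by omega)
        simp only [hf]; linarith
      have hfs : f s < 0 := by
        have := hD₁ i₀ (by omega)
        simp only [hf]; linarith
      have h0 : (0:ℝ) ∈ Set.Ioo (f s) (f r) := ⟨hfs, hfr⟩
      obtain ⟨t, htmem, hft⟩ := intermediate_value_Ioo' hrs.le hcont h0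
      have htI : t ∈ I := hconn.out hr hs ⟨htmem.1.le, htmem.2.le⟩
      obtain ⟨i₂, hD₂⟩ := hdom t htI
      have heq : c i₀ * t ^ i₀ = c i₁ * t ^ i₁ := by
        have : f t = 0 := hft
        simp only [hf] at this; linarith
      have hne₀ : i₂ ≠ i₀ := by
        intro h; subst h
        have := hD₂ i₁ (by omega)
        linarith
      have hne₁ : i₂ ≠ i₁ := by
        intro h; subst h
        have := hD₂ i₀ (by omega)
        linarith
      have h₀₂ : i₀ < i₂ :=
        dom_mono_aux c hc hrpos htmem.1 hD₀ hD₂ (Ne.symm hne₀)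
      have h₂₁ : i₂ < i₁ :=
        dom_mono_aux c hc (hpos htI) htmem.2 hD₂ hD₁ hne₁
      have : i₀ = i₂ := ih r hr t htI htmem.1 i₀ i₂ hD₀ hD₂ (by omega)
      omega
  obtain ⟨r₀, hr₀⟩ := hne
  obtain ⟨j, hj⟩ := hdom r₀ hr₀
  refine ⟨j, fun r hr => ?_⟩
  rcases lt_trichotomy r r₀ with h | h | h
  · obtain ⟨i, hi⟩ := hdom r hr
    have : i = j := key (j - i).toNat r hr r₀ hr₀ h i j hi hj le_rfl
    subst this; exact hi
  · subst h; exact hj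
  · obtain ⟨i, hi⟩ := hdom r hr
    have : j = i := key (i - j).toNat r₀ hr₀ r hr h j i hj hi le_rfl
    subst this; exact hi
end

section
/- Let k be a field equipped with a complete non-archimedean (ultrametric) multiplicative norm. Let a, b : ℤ → k be families such that ‖a_i‖ → 0 and ‖b_i‖ → 0 as |i| → ∞, and assume that for every n ∈ ℤ the sum ∑'_{i∈ℤ} a_i · b_{n-i} equals 1 if n = 0 and equals 0 otherwise. Then there exists j ∈ ℤ such that ‖a_i‖ < ‖a_j‖ for every i ≠ j. -/
open Filter

/-- From a norm-cofinitely-vanishing family, for any `r > 0`, only finitely many terms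
have norm at least `r`. -/
lemma aux_finite_ge {k : Type*} [NormedField k] {u : ℤ → k}
    (hu : Tendsto (fun i : ℤ => ‖u i‖) cofinite (nhds 0)) {r : ℝ} (hr : 0 < r) :
    {i : ℤ | r ≤ ‖u i‖}.Finite := by
  have h := hu (Iio_mem_nhds hr)
  rw [mem_map, mem_cofinite] at h
  refine h.subset ?_
  intro i hi
  simp only [Set.mem_compl_iff, Set.mem_preimage, Set.mem_Iio, not_lt]
  exact hi

/-- Existence of the (finite, nonempty) set of argmax indices of a nonzero family. -/
lemma aux_argmax {k : Type*} [NormedField k] {u : ℤ → k}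
    (hu : Tendsto (fun i : ℤ => ‖u i‖) cofinite (nhds 0)) {i₀ : ℤ} (h₀ : u i₀ ≠ 0) :
    ∃ S : Finset ℤ, S.Nonempty ∧ (∀ j ∈ S, ∀ i : ℤ, ‖u i‖ ≤ ‖u j‖) ∧
      (∀ i ∉ S, ∀ j ∈ S, ‖u i‖ < ‖u j‖) := by
  have hε : 0 < ‖u i₀‖ := norm_pos_iff.mpr h₀
  have hfin : {i : ℤ | ‖u i₀‖ ≤ ‖u i‖}.Finite := aux_finite_ge hu hε
  set F : Finset ℤ := hfin.toFinset with hF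
  have hi₀F : i₀ ∈ F := by simp [hF, Set.Finite.mem_toFinset]
  have hFne : F.Nonempty := ⟨i₀, hi₀F⟩
  set A : ℝ := F.sup' hFne (fun i => ‖u i‖) with hA
  have hle : ∀ i : ℤ, ‖u i‖ ≤ A := by
    intro i
    by_cases hiF : i ∈ F
    · exact Finset.le_sup' (fun i => ‖u i‖) hiF
    · have : ¬ ‖u i₀‖ ≤ ‖u i‖ := by
        simpa [hF, Set.Finite.mem_toFinset] using hiF
      have h1 : ‖u i‖ < ‖u i₀‖ := lt_of_not_ge this
      exact h1.le.trans (Finset.le_sup' (fun i => ‖u i‖) hi₀F)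
  obtain ⟨j₀, hj₀F, hj₀⟩ := Finset.exists_mem_eq_sup' hFne (fun i => ‖u i‖)
  refine ⟨F.filter (fun i => ‖u i‖ = A), ⟨j₀, ?_⟩, ?_, ?_⟩
  · simp [Finset.mem_filter, hj₀F, hj₀.symm]; rfl
  · intro j hj i
    rw [Finset.mem_filter] at hj
    rw [hj.2]
    exact hle i
  · intro i hi j hj
    rw [Finset.mem_filter] at hi hj
    rw [hj.2]
    rcases lt_or_eq_of_le (hle i) with h | h
    · exact h
    · exfalso
      apply hi
      constructor
      · simp only [hF, Set.Finite.mem_toFinset, Set.mem_setOf_eq]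
        calc ‖u i₀‖ ≤ A := hle i₀
        _ = ‖u i‖ := h.symm
      · exact h
  
/-- Ultrametric: the norm of a sum with a strictly dominant term equals the norm of that term. -/
lemma aux_dominant_tsum {k : Type*} [NormedField k] [CompleteSpace k] [IsUltrametricDist k]
    {f : ℤ → k} (hf : Tendsto (fun i : ℤ => ‖f i‖) cofinite (nhds 0)) {j : ℤ}
    (h : ∀ i : ℤ, i ≠ j → ‖f i‖ < ‖f j‖) : ‖∑' i : ℤ, f i‖ = ‖f j‖ := by
  have hj : 0 < ‖f j‖ := lt_of_le_of_lt (norm_nonneg _) (h (j + 1) (by omega))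
  have hsum : Summable f := by
    apply NonarchimedeanAddGroup.summable_of_tendsto_cofinite_zero
    rwa [← tendsto_zero_iff_norm_tendsto_zero] at hf
  set g : ℤ → k := fun i => if i = j then 0 else f i with hg
  have hdec : ∑' i, f i = f j + ∑' i, g i := Summable.tsum_eq_add_tsum_ite hsum j
  -- bound the norm of the remainder strictly below ‖f j‖
  have hfin : {i : ℤ | ‖f j‖ / 2 ≤ ‖g i‖}.Finite := by
    refine (aux_finite_ge hf (by linarith : (0:ℝ) < ‖f j‖ / 2)).subset ?_
    intro i hi
    simp only [Set.mem_setOf_eq] at hi ⊢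
    by_cases hij : i = j
    · simp [hg, hij] at hi; linarith
    · simpa [hg, hij] using hi
  obtain ⟨C, hC2, hClt, hCle⟩ : ∃ C : ℝ, 0 ≤ C ∧ C < ‖f j‖ ∧ ∀ i, ‖g i‖ ≤ C := by
    rcases hfin.toFinset.eq_empty_or_nonempty with he | hne
    · refine ⟨‖f j‖ / 2, by linarith, by linarith, fun i => ?_⟩
      have : i ∉ hfin.toFinset := by simp [he]
      simp only [Set.Finite.mem_toFinset, Set.mem_setOf_eq, not_le] at this
      linarith
    · set C := max (‖f j‖ / 2) (hfin.toFinset.sup' hne (fun i => ‖g i‖)) with hC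
      refine ⟨C, le_trans (by linarith) (le_max_left _ _), ?_, fun i => ?_⟩
      · apply max_lt (by linarith)
        apply Finset.sup'_lt_iff hne |>.mpr
        intro i hi
        by_cases hij : i = j
        · simpa [hg, hij] using hj
        · simpa [hg, hij] using h i hij
      · by_cases hiF : i ∈ hfin.toFinset
        · exact le_trans (Finset.le_sup' (fun i => ‖g i‖) hiF) (le_max_right _ _)
        · simp only [Set.Finite.mem_toFinset, Set.mem_setOf_eq, not_le] at hiF
          exact le_trans hiF.le (le_max_left _ _)
  have hrem : ‖∑' i, g i‖ ≤ C :=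
    IsUltrametricDist.norm_tsum_le_of_forall_le_of_nonneg hC2 hCle
  rw [hdec]
  have hne : ‖f j‖ ≠ ‖∑' i, g i‖ := by
    intro hcontra
    rw [← hcontra] at hrem
    linarith
  rw [IsUltrametricDist.norm_add_eq_max_of_norm_ne_norm hne]
  exact max_eq_left (le_trans hrem hClt.le)

theorem invertible_circle_series_has_dominant_coefficient
    {k : Type*} [NormedField k] [CompleteSpace k] [IsUltrametricDist k]
    (a b : ℤ → k)
    (ha : Tendsto (fun i : ℤ => ‖a i‖) cofinite (nhds 0))
    (hb : Tendsto (fun i : ℤ => ‖b i‖) cofinite (nhds 0))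
    (hinv : ∀ n : ℤ, (∑' i : ℤ, a i * b (n - i)) = if n = 0 then 1 else 0) :
    ∃ j : ℤ, ∀ i : ℤ, i ≠ j → ‖a i‖ < ‖a j‖ := by
  -- a and b are nonzero
  have hone : (∑' i : ℤ, a i * b (0 - i)) = 1 := by simpa using hinv 0
  have hane : ∃ i : ℤ, a i ≠ 0 := by
    by_contra hcon
    push_neg at hcon
    simp [hcon] at hone
  have hbne : ∃ i : ℤ, b i ≠ 0 := by
    by_contra hcon
    push_neg at hcon
    simp [hcon] at hone
  obtain ⟨ia, hia⟩ := hane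
  obtain ⟨ib, hib⟩ := hbne
  obtain ⟨Sa, hSane, hSamax, hSalt⟩ := aux_argmax ha hia
  obtain ⟨Sb, hSbne, hSbmax, hSblt⟩ := aux_argmax hb hib
  -- key: the cofinite vanishing of the product family, for any n
  have hprod : ∀ n : ℤ, Tendsto (fun i : ℤ => ‖a i * b (n - i)‖) cofinite (nhds 0) := by
    intro n
    have ha' : Tendsto a cofinite (nhds 0) := by
      rwa [← tendsto_zero_iff_norm_tendsto_zero] at ha
    have hb' : Tendsto (fun i : ℤ => b (n - i)) cofinite (nhds 0) := by
      have hinj : Function.Injective (fun i : ℤ => n - i) := by intro x y h; simp only at h; omega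
      have : Tendsto (fun i : ℤ => n - i) cofinite cofinite :=
        hinj.tendsto_cofinite
      exact (tendsto_zero_iff_norm_tendsto_zero.mpr hb).comp this
    have := ha'.mul hb'
    rw [mul_zero] at this
    exact tendsto_zero_iff_norm_tendsto_zero.mp this
  -- norm positivity of the maxima
  have hApos : ∀ j ∈ Sa, 0 < ‖a j‖ := fun j hj =>
    lt_of_lt_of_le (norm_pos_iff.mpr hia) (hSamax j hj ia)
  have hBpos : ∀ j ∈ Sb, 0 < ‖b j‖ := fun j hj =>
    lt_of_lt_of_le (norm_pos_iff.mpr hib) (hSbmax j hj ib)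
  -- key claim: for extreme choices, the coefficient sum has norm A*B > 0, forcing index 0
  have key : ∀ ja ∈ Sa, ∀ jb ∈ Sb,
      (∀ i ∈ Sa, i ≠ ja → (ja + jb - i) ∉ Sb) → ja + jb = 0 := by
    intro ja hja jb hjb hsep
    set n := ja + jb with hn
    have hdom : ∀ i : ℤ, i ≠ ja → ‖a i * b (n - i)‖ < ‖a ja * b (n - ja)‖ := by
      intro i hi
      have hnja : n - ja = jb := by omega
      rw [norm_mul, norm_mul, hnja]
      by_cases hiSa : i ∈ Sa
      · have hnb : (n - i) ∉ Sb := hsep i hiSa hi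
        have h1 : ‖a i‖ ≤ ‖a ja‖ := hSamax ja hja i
        have h2 : ‖b (n - i)‖ < ‖b jb‖ := hSblt _ hnb jb hjb
        calc ‖a i‖ * ‖b (n - i)‖ ≤ ‖a ja‖ * ‖b (n - i)‖ :=
              mul_le_mul_of_nonneg_right h1 (norm_nonneg _)
        _ < ‖a ja‖ * ‖b jb‖ := by
              exact mul_lt_mul_of_pos_left h2 (hApos ja hja)
      · have h1 : ‖a i‖ < ‖a ja‖ := hSalt i hiSa ja hja
        have h2 : ‖b (n - i)‖ ≤ ‖b jb‖ := hSbmax jb hjb (n - i)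
        calc ‖a i‖ * ‖b (n - i)‖ ≤ ‖a i‖ * ‖b jb‖ :=
              mul_le_mul_of_nonneg_left h2 (norm_nonneg _)
        _ < ‖a ja‖ * ‖b jb‖ :=
              mul_lt_mul_of_pos_right h1 (hBpos jb hjb)
    have hnorm : ‖∑' i : ℤ, a i * b (n - i)‖ = ‖a ja * b (n - ja)‖ :=
      aux_dominant_tsum (hprod n) hdom
    have hpos : 0 < ‖∑' i : ℤ, a i * b (n - i)‖ := by
      rw [hnorm, norm_mul]
      have : n - ja = jb := by omega
      rw [this]
      exact mul_pos (hApos ja hja) (hBpos jb hjb)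
    by_contra hne0
    rw [hinv n, if_neg hne0] at hpos
    simp at hpos
  -- apply to max and min extremes
  have hmax : Sa.max' hSane + Sb.max' hSbne = 0 := by
    apply key _ (Sa.max'_mem hSane) _ (Sb.max'_mem hSbne)
    intro i hi hne hcon
    have h1 : i ≤ Sa.max' hSane := Sa.le_max' i hi
    have h2 : Sa.max' hSane + Sb.max' hSbne - i ≤ Sb.max' hSbne := Sb.le_max' _ hcon
    omega
  have hmin : Sa.min' hSane + Sb.min' hSbne = 0 := by
    apply key _ (Sa.min'_mem hSane) _ (Sb.min'_mem hSbne)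
    intro i hi hne hcon
    have h1 : Sa.min' hSane ≤ i := Sa.min'_le i hi
    have h2 : Sb.min' hSbne ≤ Sa.min' hSane + Sb.min' hSbne - i := Sb.min'_le _ hcon
    omega
  have h1 : Sa.min' hSane ≤ Sa.max' hSane := Sa.min'_le _ (Sa.max'_mem hSane)
  have h2 : Sb.min' hSbne ≤ Sb.max' hSbne := Sb.min'_le _ (Sb.max'_mem hSbne)
  have heq : Sa.min' hSane = Sa.max' hSane := by omega
  refine ⟨Sa.max' hSane, fun i hi => ?_⟩
  have hiSa : i ∉ Sa := by
    intro hcon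
    have := Sa.min'_le i hcon
    have := Sa.le_max' i hcon
    omega
  exact hSalt i hiSa _ (Sa.max'_mem hSane)
end

section
/- Let k be a field equipped with a complete non-archimedean (ultrametric) multiplicative norm, let R > 0, and let a : ℤ → k satisfy ‖a_i‖ · r^i → 0 as |i| → ∞ for every r with 0 < r < R (so that ∑_{i∈ℤ} a_i T^i defines an analytic function f on the punctured open disc {0 < |T| < R}). Assume f is invertible on a punctured neighborhood of the origin: there exist ρ with 0 < ρ ≤ R and b : ℤ → k with ‖b_i‖ · r^i → 0 as |i| → ∞ for every r with 0 < r < ρ, such that for every n ∈ ℤ the sum ∑'_{i∈ℤ} a_i · b_{n-i} equals 1 if n = 0 and equals 0 otherwise. Then there exists N ∈ ℤ such that a_i = 0 for every i < N; that is, f has no essential singularity at the origin and extends to a meromorphic function on the disc. -/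
open Filter

lemma exists_min_argmax (f : ℤ → ℝ) (hf : Tendsto f cofinite (nhds 0))
    (m : ℤ) (hm : 0 < f m) :
    ∃ p : ℤ, (∀ i, f i ≤ f p) ∧ (∀ i, i < p → f i < f p) := by
  have hev : ∀ᶠ i in cofinite, f i < f m := hf.eventually_lt_const hm
  have hfin : {i : ℤ | ¬ f i < f m}.Finite := eventually_cofinite.mp hev
  set S := hfin.toFinset with hSdef
  have hmemS : ∀ i, i ∈ S ↔ ¬ f i < f m := fun i => Set.Finite.mem_toFinset _
  have hmS : m ∈ S := (hmemS m).mpr (lt_irrefl _)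
  have hne : S.Nonempty := ⟨m, hmS⟩
  set M := S.sup' hne f with hMdef
  obtain ⟨j, hjS, hjM⟩ := S.exists_mem_eq_sup' hne f
  have hAne : (S.filter (fun i => f i = M)).Nonempty := ⟨j, Finset.mem_filter.mpr ⟨hjS, hjM.symm⟩⟩
  set p := (S.filter (fun i => f i = M)).min' hAne with hpdef
  have hpmem := (S.filter (fun i => f i = M)).min'_mem hAne
  rw [Finset.mem_filter] at hpmem
  have hfp : f p = M := hpmem.2
  have hub : ∀ i, f i ≤ f p := by
    intro i
    rw [hfp]
    by_cases hiS : i ∈ S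
    · exact Finset.le_sup' f hiS
    · have hlt : f i < f m := not_not.mp (fun hcon => hiS ((hmemS i).mpr hcon))
      exact hlt.le.trans (Finset.le_sup' f hmS)
  refine ⟨p, hub, fun i hip => ?_⟩
  rcases lt_or_eq_of_le (hub i) with h | h
  · exact h
  · exfalso
    have hiS : i ∈ S := by
      rw [hmemS i, not_lt, h, hfp]
      exact Finset.le_sup' f hmS
    have : p ≤ i := Finset.min'_le _ i (Finset.mem_filter.mpr ⟨hiS, h.trans hfp⟩)
    exact absurd hip (not_lt.mpr this)

lemma tsum_ne_zero_of_dominant {k : Type*} [NormedField k] [CompleteSpace k] [IsUltrametricDist k]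
    (x : ℤ → k) (hx : Tendsto (fun i => ‖x i‖) cofinite (nhds 0))
    (p : ℤ) (hp : x p ≠ 0) (hdom : ∀ i, i ≠ p → ‖x i‖ < ‖x p‖) :
    (∑' i, x i) ≠ 0 := by
  have hc : (0:ℝ) < ‖x p‖ := norm_pos_iff.mpr hp
  have hsum : Summable x := by
    apply NonarchimedeanAddGroup.summable_of_tendsto_cofinite_zero
    exact tendsto_zero_iff_norm_tendsto_zero.mpr hx
  have hev : ∀ᶠ i in cofinite, ‖x i‖ < ‖x p‖ / 2 := hx.eventually_lt_const (by linarith)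
  have hfin : {i : ℤ | ¬ ‖x i‖ < ‖x p‖ / 2}.Finite := eventually_cofinite.mp hev
  set T := (hfin.toFinset).erase p with hT
  set ε := max (‖x p‖ / 2) ((T.sup fun i => ‖x i‖₊ : NNReal) : ℝ) with hε
  have hε1 : ε < ‖x p‖ := by
    rw [hε, max_lt_iff]
    constructor
    · linarith
    · rcases T.eq_empty_or_nonempty with h | h
      · simp [h, hc]
      · have hlt : (T.sup fun i => ‖x i‖₊ : NNReal) < ‖x p‖₊ := by
          rw [Finset.sup_lt_iff]
          · intro i hi
            have hip : i ≠ p := Finset.ne_of_mem_erase hi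
            exact_mod_cast hdom i hip
          · exact_mod_cast hc
        exact_mod_cast hlt
  have hε2 : ∀ i, i ≠ p → ‖x i‖ ≤ ε := by
    intro i hip
    by_cases hiT : i ∈ hfin.toFinset
    · have : i ∈ T := Finset.mem_erase.mpr ⟨hip, hiT⟩
      refine le_max_of_le_right ?_
      exact_mod_cast Finset.le_sup (f := fun i => ‖x i‖₊) this
    · have : ‖x i‖ < ‖x p‖ / 2 := not_not.mp (fun hcon => hiT (hfin.mem_toFinset.mpr hcon))
      exact le_max_of_le_left this.le
  have hsplit := hsum.tsum_eq_add_tsum_ite p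
  intro h0
  rw [h0] at hsplit
  have hbound : ‖∑' i, if i = p then 0 else x i‖ ≤ ε := by
    apply IsUltrametricDist.norm_tsum_le_of_forall_le_of_nonneg (by positivity)
    intro i
    by_cases hip : i = p
    · simp [hip]; positivity
    · simpa [hip] using hε2 i hip
  have : ‖x p‖ ≤ ε := by
    have : x p = - ∑' i, if i = p then 0 else x i := eq_neg_of_add_eq_zero_left hsplit.symm
    rw [this, norm_neg]
    exact hbound
  linarith

lemma conv_argmax_add_eq_zero {k : Type*} [NormedField k] [CompleteSpace k] [IsUltrametricDist k]
    (a b : ℤ → k) (r : ℝ) (hr : 0 < r)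
    (hta : Tendsto (fun i : ℤ => ‖a i‖ * r ^ i) cofinite (nhds 0))
    (htb : Tendsto (fun i : ℤ => ‖b i‖ * r ^ i) cofinite (nhds 0))
    (hab : ∀ n : ℤ, (∑' i : ℤ, a i * b (n - i)) = if n = 0 then 1 else 0)
    (p q : ℤ)
    (hpa : ∀ i, ‖a i‖ * r ^ i ≤ ‖a p‖ * r ^ p)
    (hpa' : ∀ i, i < p → ‖a i‖ * r ^ i < ‖a p‖ * r ^ p)
    (hqb : ∀ i, ‖b i‖ * r ^ i ≤ ‖b q‖ * r ^ q)
    (hqb' : ∀ i, i < q → ‖b i‖ * r ^ i < ‖b q‖ * r ^ q)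
    (hap : a p ≠ 0) (hbq : b q ≠ 0) :
    p + q = 0 := by
  by_contra hne
  set n := p + q with hn
  set x : ℤ → k := fun i => a i * b (n - i) with hxdef
  have hrn : (0:ℝ) < r ^ n := zpow_pos hr n
  have hzp : ∀ i : ℤ, r ^ i * r ^ (n - i) = r ^ n := by
    intro i
    rw [← zpow_add₀ hr.ne']
    congr 1
    ring
  have hxnorm : ∀ i, ‖x i‖ * r ^ n = (‖a i‖ * r ^ i) * (‖b (n - i)‖ * r ^ (n - i)) := by
    intro i
    rw [hxdef]
    simp only [norm_mul]
    rw [← hzp i]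
    ring
  have hnpq : n - p = q := by rw [hn]; ring
  have hMp : (0:ℝ) < ‖a p‖ * r ^ p :=
    mul_pos (norm_pos_iff.mpr hap) (zpow_pos hr p)
  have hMq : (0:ℝ) < ‖b q‖ * r ^ q :=
    mul_pos (norm_pos_iff.mpr hbq) (zpow_pos hr q)
  have hxp : ‖x p‖ * r ^ n = (‖a p‖ * r ^ p) * (‖b q‖ * r ^ q) := by
    rw [hxnorm p, hnpq]
  have hcof : Tendsto (fun i : ℤ => n - i) cofinite cofinite := by
    apply Function.Injective.tendsto_cofinite
    intro i j hij
    simp only at hij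
    omega
  have htprod : Tendsto (fun i : ℤ => (‖a i‖ * r ^ i) * (‖b (n - i)‖ * r ^ (n - i)))
      cofinite (nhds 0) := by
    simpa using hta.mul (htb.comp hcof)
  have htx : Tendsto (fun i => ‖x i‖) cofinite (nhds 0) := by
    have heq : (fun i => ‖x i‖) =
        fun i => ((‖a i‖ * r ^ i) * (‖b (n - i)‖ * r ^ (n - i))) * (r ^ n)⁻¹ := by
      funext i
      rw [← hxnorm i]
      field_simp
    rw [heq]
    simpa using htprod.mul_const (r ^ n)⁻¹
  have hdom : ∀ i, i ≠ p → ‖x i‖ < ‖x p‖ := by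
    intro i hip
    rw [← mul_lt_mul_iff_of_pos_right hrn, hxnorm i, hxp]
    rcases lt_or_gt_of_ne hip with h | h
    · calc (‖a i‖ * r ^ i) * (‖b (n - i)‖ * r ^ (n - i))
          ≤ (‖a i‖ * r ^ i) * (‖b q‖ * r ^ q) :=
            mul_le_mul_of_nonneg_left (hqb _) (by positivity)
        _ < (‖a p‖ * r ^ p) * (‖b q‖ * r ^ q) :=
            mul_lt_mul_of_pos_right (hpa' i h) hMq
    · have hlt : n - i < q := by omega
      calc (‖a i‖ * r ^ i) * (‖b (n - i)‖ * r ^ (n - i))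
          ≤ (‖a p‖ * r ^ p) * (‖b (n - i)‖ * r ^ (n - i)) :=
            mul_le_mul_of_nonneg_right (hpa i) (by positivity)
        _ < (‖a p‖ * r ^ p) * (‖b q‖ * r ^ q) :=
            mul_lt_mul_of_pos_left (hqb' _ hlt) hMp
  have hxpne : x p ≠ 0 := by
    rw [hxdef]
    simp only [hnpq]
    exact mul_ne_zero hap hbq
  have hne0 := tsum_ne_zero_of_dominant x htx p hxpne hdom
  rw [hab n, if_neg hne] at hne0
  exact hne0 rfl

lemma argmax_mono (g : ℤ → ℝ) (hg : ∀ i, 0 ≤ g i) (r s : ℝ) (hr : 0 < r) (hrs : r < s)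
    (p ps : ℤ)
    (h1 : ∀ i, i < p → g i * r ^ i < g p * r ^ p)
    (h2 : ∀ i, g i * s ^ i ≤ g ps * s ^ ps) :
    p ≤ ps := by
  by_contra hcon
  push_neg at hcon
  have hs : (0:ℝ) < s := hr.trans hrs
  have hA : g ps * r ^ ps < g p * r ^ p := h1 ps hcon
  have hB : g p * s ^ p ≤ g ps * s ^ ps := h2 p
  have hgp : 0 < g p := by
    have h0 : (0:ℝ) < g p * r ^ p := lt_of_le_of_lt (mul_nonneg (hg ps) (zpow_pos hr ps).le) hA
    by_contra hle
    push_neg at hle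
    nlinarith [zpow_pos hr p]
  set d := (p - ps).toNat with hd
  have hdz : (d : ℤ) = p - ps := Int.toNat_of_nonneg (by omega)
  have hd0 : d ≠ 0 := by omega
  have hr1 : r ^ (p:ℤ) = r ^ (ps:ℤ) * r ^ d := by
    rw [← zpow_natCast r d, ← zpow_add₀ hr.ne']
    congr 1
    omega
  have hs1 : s ^ (p:ℤ) = s ^ (ps:ℤ) * s ^ d := by
    rw [← zpow_natCast s d, ← zpow_add₀ hs.ne']
    congr 1
    omega
  have hA2 : g ps * r ^ (ps:ℤ) < (g p * r ^ d) * r ^ (ps:ℤ) := by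
    rw [hr1] at hA
    calc g ps * r ^ (ps:ℤ) < g p * (r ^ (ps:ℤ) * r ^ d) := hA
      _ = (g p * r ^ d) * r ^ (ps:ℤ) := by ring
  have hA' : g ps < g p * r ^ d := lt_of_mul_lt_mul_right hA2 (zpow_pos hr ps).le
  have hB2 : (g p * s ^ d) * s ^ (ps:ℤ) ≤ g ps * s ^ (ps:ℤ) := by
    rw [hs1] at hB
    calc (g p * s ^ d) * s ^ (ps:ℤ) = g p * (s ^ (ps:ℤ) * s ^ d) := by ring
      _ ≤ g ps * s ^ (ps:ℤ) := hB
  have hB' : g p * s ^ d ≤ g ps := le_of_mul_le_mul_right hB2 (zpow_pos hs ps)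
  have hpow : r ^ d < s ^ d := pow_lt_pow_left₀ hrs hr.le hd0
  nlinarith

theorem no_essential_singularity_of_invertible_near_puncture
    {k : Type*} [NormedField k] [CompleteSpace k] [IsUltrametricDist k]
    (R : ℝ) (hR : 0 < R) (a : ℤ → k)
    (ha : ∀ r : ℝ, 0 < r → r < R →
      Tendsto (fun i : ℤ => ‖a i‖ * r ^ i) cofinite (nhds 0))
    (hinv : ∃ ρ : ℝ, 0 < ρ ∧ ρ ≤ R ∧ ∃ b : ℤ → k,
      (∀ r : ℝ, 0 < r → r < ρ →
        Tendsto (fun i : ℤ => ‖b i‖ * r ^ i) cofinite (nhds 0)) ∧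
      ∀ n : ℤ, (∑' i : ℤ, a i * b (n - i)) = if n = 0 then 1 else 0) :
    ∃ N : ℤ, ∀ i : ℤ, i < N → a i = 0 := by
  obtain ⟨ρ, hρ, hρR, b, hb, hab⟩ := hinv
  have ha' : ∀ r : ℝ, 0 < r → r < ρ →
      Tendsto (fun i : ℤ => ‖a i‖ * r ^ i) cofinite (nhds 0) :=
    fun r h1 h2 => ha r h1 (h2.trans_le hρR)
  -- a and b are not identically zero
  have hane : ∃ m, a m ≠ 0 := by
    by_contra h
    push_neg at h
    have := hab 0
    simp [h] at this
  have hbne : ∃ m, b m ≠ 0 := by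
    by_contra h
    push_neg at h
    have := hab 0
    simp [h] at this
  obtain ⟨ma, hma⟩ := hane
  obtain ⟨mb, hmb⟩ := hbne
  -- for each radius r in (0, ρ), get minimal argmaxes p(r), q(r) with p(r) + q(r) = 0
  have key : ∀ r : ℝ, 0 < r → r < ρ → ∃ p : ℤ,
      (∀ i, ‖a i‖ * r ^ i ≤ ‖a p‖ * r ^ p) ∧
      (∀ i, i < p → ‖a i‖ * r ^ i < ‖a p‖ * r ^ p) ∧
      (∀ i, ‖b i‖ * r ^ i ≤ ‖b (-p)‖ * r ^ (-p)) ∧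
      (∀ i, i < -p → ‖b i‖ * r ^ i < ‖b (-p)‖ * r ^ (-p)) := by
    intro r h1 h2
    obtain ⟨p, hp1, hp2⟩ := exists_min_argmax _ (ha' r h1 h2) ma
      (mul_pos (norm_pos_iff.mpr hma) (zpow_pos h1 ma))
    obtain ⟨q, hq1, hq2⟩ := exists_min_argmax _ (hb r h1 h2) mb
      (mul_pos (norm_pos_iff.mpr hmb) (zpow_pos h1 mb))
    have hap : a p ≠ 0 := by
      have : (0:ℝ) < ‖a p‖ * r ^ p :=
        lt_of_lt_of_le (mul_pos (norm_pos_iff.mpr hma) (zpow_pos h1 ma)) (hp1 ma)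
      intro hz
      rw [hz] at this
      simp at this
    have hbq : b q ≠ 0 := by
      have : (0:ℝ) < ‖b q‖ * r ^ q :=
        lt_of_lt_of_le (mul_pos (norm_pos_iff.mpr hmb) (zpow_pos h1 mb)) (hq1 mb)
      intro hz
      rw [hz] at this
      simp at this
    have hpq : p + q = 0 := conv_argmax_add_eq_zero a b r h1 (ha' r h1 h2) (hb r h1 h2)
      hab p q hp1 hp2 hq1 hq2 hap hbq
    have hq : q = -p := by omega
    exact ⟨p, hp1, hp2, hq ▸ hq1, hq ▸ hq2⟩
  set r0 := ρ / 2 with hr0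
  have hr0pos : 0 < r0 := by positivity
  have hr0lt : r0 < ρ := by rw [hr0]; linarith
  obtain ⟨N, hN1, hN2, hN3, hN4⟩ := key r0 hr0pos hr0lt
  refine ⟨N, fun m0 hm0 => ?_⟩
  -- for every r ∈ (0, r0), the argmax is still N, giving a strict bound
  have hstep : ∀ r : ℝ, 0 < r → r < r0 → ‖a m0‖ * r ^ m0 < ‖a N‖ * r ^ N := by
    intro r h1 h2
    obtain ⟨p, hp1, hp2, hp3, hp4⟩ := key r h1 (h2.trans hr0lt)
    have hle1 : p ≤ N := argmax_mono (fun i => ‖a i‖) (fun i => norm_nonneg _)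
      r r0 h1 h2 p N hp2 hN1
    have hle2 : -p ≤ -N := argmax_mono (fun i => ‖b i‖) (fun i => norm_nonneg _)
      r r0 h1 h2 (-p) (-N) hp4 hN3
    have hpN : p = N := by omega
    rw [← hpN]
    exact hp2 m0 (by omega)
  -- conclude by taking r → 0
  have hd : ∃ d : ℕ, d ≠ 0 ∧ (d : ℤ) = N - m0 := ⟨(N - m0).toNat, by omega, by omega⟩
  obtain ⟨d, hd0, hdz⟩ := hd
  have hbound : ∀ r : ℝ, 0 < r → r < r0 → ‖a m0‖ ≤ ‖a N‖ * r ^ d := by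
    intro r h1 h2
    have h3 := hstep r h1 h2
    have hzz : r ^ (N:ℤ) = r ^ (m0:ℤ) * r ^ d := by
      rw [← zpow_natCast r d, ← zpow_add₀ h1.ne']
      congr 1
      omega
    rw [hzz] at h3
    have h4 : ‖a m0‖ * r ^ (m0:ℤ) < (‖a N‖ * r ^ d) * r ^ (m0:ℤ) := by
      calc ‖a m0‖ * r ^ (m0:ℤ) < ‖a N‖ * (r ^ (m0:ℤ) * r ^ d) := h3
        _ = (‖a N‖ * r ^ d) * r ^ (m0:ℤ) := by ring
    exact (lt_of_mul_lt_mul_right h4 (zpow_pos h1 m0).le).le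
  have htend : Tendsto (fun r : ℝ => ‖a N‖ * r ^ d) (nhdsWithin 0 (Set.Ioi 0)) (nhds 0) := by
    have hcont : Tendsto (fun r : ℝ => ‖a N‖ * r ^ d) (nhds 0) (nhds (‖a N‖ * (0:ℝ) ^ d)) :=
      (continuous_const.mul (continuous_pow d)).tendsto 0
    rw [zero_pow hd0, mul_zero] at hcont
    exact hcont.mono_left nhdsWithin_le_nhds
  have hev : ∀ᶠ r in nhdsWithin (0:ℝ) (Set.Ioi 0), ‖a m0‖ ≤ ‖a N‖ * r ^ d := by
    filter_upwards [Ioo_mem_nhdsGT_of_mem (Set.mem_Ico.mpr ⟨le_refl 0, hr0pos⟩)] with r hr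
    exact hbound r hr.1 hr.2
  have : ‖a m0‖ ≤ 0 := ge_of_tendsto htend hev
  have := le_antisymm this (norm_nonneg _)
  exact norm_eq_zero.mp this
end
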